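/- Let λ and λₙ be C² positive functions on [0,∞) with value > 1 at 0 and convex logarithms, with λₙ(μ) ≤ λₙ₊₁(μ) ≤ λ(μ) for all n, μ, λₙ → λ pointwise, and λₙ' → λ' pointwise. If inf_{μ>0} ln λ(μ)/μ = lim_{μ→∞} ln λ(μ)/μ (finite), then cₙ* := inf_{μ>0} ln λₙ(μ)/μ converges to c* := inf_{μ>0} ln λ(μ)/μ. -/

import Mathlib

open Set Filter

open Topology

/-- A Dini-type theorem: monotone sequence of continuous functions converging
pointwise to a continuous function on a compact set is eventually uniformly close
from below. -/
lemma dini_lower {K : Set ℝ} (hK : IsCompact K) {F : ℕ → ℝ → ℝ} {g : ℝ → ℝ}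
    (hFc : ∀ n, ContinuousOn (F n) K) (hgc : ContinuousOn g K)
    (hmn : ∀ x ∈ K, Monotone fun n => F n x)
    (hlim : ∀ x ∈ K, Tendsto (fun n => F n x) atTop (nhds (g x)))
    {ε : ℝ} (hε : 0 < ε) : ∃ N, ∀ n ≥ N, ∀ x ∈ K, g x - ε < F n x := by
  have main : ∃ N, ∀ n ≥ N, ∀ x ∈ K ∩ K, g x - ε < F n x := by
    refine hK.induction_on (p := fun s => ∃ N, ∀ n ≥ N, ∀ x ∈ s ∩ K, g x - ε < F n x)
      ⟨0, by simp⟩ (fun s t hst ⟨N, hN⟩ => ⟨N, fun n hn x hx => hN n hn x ⟨hst hx.1, hx.2⟩⟩)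
      (fun s t ⟨N, hN⟩ ⟨N', hN'⟩ => ⟨max N N', fun n hn x hx => ?_⟩) (fun x hx => ?_)
    · rcases hx.1 with h | h
      · exact hN n (le_trans (le_max_left _ _) hn) x ⟨h, hx.2⟩
      · exact hN' n (le_trans (le_max_right _ _) hn) x ⟨h, hx.2⟩
    · -- find m with F m x > g x - ε/2
      have : ∀ᶠ m in atTop, g x - ε/2 < F m x :=
        (hlim x hx).eventually (eventually_gt_nhds (by linarith))
      obtain ⟨m, hm⟩ := this.exists
      have hcw : ContinuousWithinAt (fun y => F m y - g y) K x :=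
        ((hFc m x hx).sub (hgc x hx))
      have hev : {y | g y - ε < F m y} ∈ 𝓝[K] x := by
        have : Ioi (-ε) ∈ nhds (F m x - g x) := Ioi_mem_nhds (by linarith)
        filter_upwards [hcw this] with y hy
        simp only [mem_preimage, mem_Ioi] at hy
        simpa using by linarith [hy] 
      exact ⟨{y | g y - ε < F m y}, hev, m, fun n hn y hy =>
        lt_of_lt_of_le hy.1 (hmn y hy.2 hn)⟩
  obtain ⟨N, hN⟩ := main
  exact ⟨N, fun n hn x hx => hN n hn x ⟨hx, hx⟩⟩

/-- A convex function positive at `0` and continuous has `g μ / μ` bounded below on `Ioi 0`. -/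
lemma lower_aux {g : ℝ → ℝ} (hc : ContinuousOn g (Ici 0)) (hg0 : 0 < g 0)
    (hcv : ConvexOn ℝ (Ici 0) g) : ∃ B : ℝ, ∀ μ ∈ Ioi (0:ℝ), B ≤ g μ / μ := by
  have hev : g ⁻¹' (Ioi 0) ∈ 𝓝[Ici 0] 0 := hc 0 Set.self_mem_Ici (Ioi_mem_nhds hg0)
  obtain ⟨δ, hδ, hsub⟩ := Metric.mem_nhdsWithin_iff.mp hev
  set d : ℝ := δ / 2 with hd
  have hdpos : 0 < d := by positivity
  set s₁ : ℝ := (g d - g 0) / d with hs₁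
  refine ⟨min 0 s₁, fun μ hμ => ?_⟩
  have hμ0 : (0:ℝ) < μ := hμ
  rcases le_total μ d with h | h
  · have hgμ : 0 < g μ := by
      apply hsub
      constructor
      · simp only [Metric.mem_ball, Real.dist_eq, sub_zero, abs_of_pos hμ0]
        linarith
      · exact le_of_lt hμ0
    exact le_trans (min_le_left _ _) (div_nonneg hgμ.le hμ0.le)
  · refine le_trans (min_le_right _ _) ?_
    have hkey : g 0 + s₁ * μ ≤ g μ := by
      rcases eq_or_lt_of_le h with rfl | hlt
      · have h3 : s₁ * d = g d - g 0 := by rw [hs₁]; exact div_mul_cancel₀ _ hdpos.ne'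
        linarith
      · have hslope := hcv.slope_mono_adjacent (le_refl (0:ℝ))
          (le_of_lt (lt_trans hdpos hlt)) hdpos hlt
        have h1 : (g d - g 0) / (d - 0) = s₁ := by rw [sub_zero]
        rw [h1] at hslope
        have h2 : s₁ * (μ - d) ≤ g μ - g d := (le_div_iff₀ (by linarith)).mp hslope
        have h3 : s₁ * d = g d - g 0 := by rw [hs₁]; exact div_mul_cancel₀ _ hdpos.ne'
        nlinarith
    rw [le_div_iff₀ hμ0]
    nlinarith


theorem stmt_11 (l : ℝ → ℝ) (ln : ℕ → ℝ → ℝ)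
    (hC2 : ContDiffOn ℝ 2 l (Ici 0))
    (hC2n : ∀ n, ContDiffOn ℝ 2 (ln n) (Ici 0))
    (hpos : ∀ μ ∈ Ici (0:ℝ), 0 < l μ)
    (hposn : ∀ n, ∀ μ ∈ Ici (0:ℝ), 0 < ln n μ)
    (h0 : 1 < l 0)
    (h0n : ∀ n, 1 < ln n 0)
    (hconv : ConvexOn ℝ (Ici 0) (fun μ => Real.log (l μ)))
    (hconvn : ∀ n, ConvexOn ℝ (Ici 0) (fun μ => Real.log (ln n μ)))
    (hmono : ∀ n, ∀ μ ∈ Ici (0:ℝ), ln n μ ≤ ln (n + 1) μ)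
    (hle : ∀ n, ∀ μ ∈ Ici (0:ℝ), ln n μ ≤ l μ)
    (hptwise : ∀ μ ∈ Ici (0:ℝ), Tendsto (fun n => ln n μ) atTop (nhds (l μ)))
    (hderiv : ∀ μ ∈ Ici (0:ℝ), Tendsto (fun n => deriv (ln n) μ) atTop (nhds (deriv l μ)))
    (hinf : Tendsto (fun μ => Real.log (l μ) / μ) atTop
      (nhds (sInf ((fun μ => Real.log (l μ) / μ) '' Ioi 0)))) :
    Tendsto (fun n => sInf ((fun μ => Real.log (ln n μ) / μ) '' Ioi 0)) atTop
      (nhds (sInf ((fun μ => Real.log (l μ) / μ) '' Ioi 0))) := by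
  set c : ℝ := sInf ((fun μ => Real.log (l μ) / μ) '' Ioi 0) with hcdef
  -- monotonicity in n
  have lnmono : ∀ μ ∈ Ici (0:ℝ), Monotone fun n => ln n μ :=
    fun μ hμ => monotone_nat_of_le_succ fun n => hmono n μ hμ
  have hdiv : ∀ (a b μ : ℝ), 0 < μ → a ≤ b → a / μ ≤ b / μ := by
    intro a b μ hμ hab; gcongr
  have hΦmono : ∀ μ ∈ Ioi (0:ℝ), Monotone fun n => Real.log (ln n μ) / μ := by
    intro μ hμ m n hmn
    exact hdiv _ _ μ hμ
      (Real.log_le_log (hposn m μ (le_of_lt hμ : (0:ℝ) ≤ μ)) (lnmono μ (le_of_lt hμ : (0:ℝ) ≤ μ) hmn))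
  have hΦle : ∀ n, ∀ μ ∈ Ioi (0:ℝ), Real.log (ln n μ) / μ ≤ Real.log (l μ) / μ := by
    intro n μ hμ
    exact hdiv _ _ μ hμ (Real.log_le_log (hposn n μ (le_of_lt hμ : (0:ℝ) ≤ μ)) (hle n μ (le_of_lt hμ : (0:ℝ) ≤ μ)))
  have hΦlim : ∀ μ ∈ Ioi (0:ℝ), Tendsto (fun n => Real.log (ln n μ) / μ) atTop
      (nhds (Real.log (l μ) / μ)) := by
    intro μ hμ
    exact (((Real.continuousAt_log (hpos μ (le_of_lt hμ : (0:ℝ) ≤ μ)).ne').tendsto.comp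
      (hptwise μ (le_of_lt hμ : (0:ℝ) ≤ μ)))).div_const μ
  -- uniform lower bound B
  obtain ⟨B, hB⟩ := lower_aux (g := fun μ => Real.log (ln 0 μ))
    (((hC2n 0).continuousOn).log (fun x hx => (hposn 0 x hx).ne'))
    (Real.log_pos (h0n 0)) (hconvn 0)
  have hBn : ∀ n, ∀ μ ∈ Ioi (0:ℝ), B ≤ Real.log (ln n μ) / μ :=
    fun n μ hμ => le_trans (hB μ hμ) (hΦmono μ hμ (Nat.zero_le n))
  have hBl : ∀ μ ∈ Ioi (0:ℝ), B ≤ Real.log (l μ) / μ :=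
    fun μ hμ => le_trans (hBn 0 μ hμ) (hΦle 0 μ hμ)
  have hSbdd : BddBelow ((fun μ => Real.log (l μ) / μ) '' Ioi 0) := by
    refine ⟨B, fun y hy => ?_⟩
    obtain ⟨μ, hμ, rfl⟩ := hy
    exact hBl μ hμ
  have hSnbdd : ∀ n, BddBelow ((fun μ => Real.log (ln n μ) / μ) '' Ioi 0) := by
    intro n
    refine ⟨B, fun y hy => ?_⟩
    obtain ⟨μ, hμ, rfl⟩ := hy
    exact hBn n μ hμ
  have hSne : ((fun μ => Real.log (l μ) / μ) '' Ioi 0).Nonempty :=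
    ⟨_, mem_image_of_mem _ (mem_Ioi.mpr one_pos)⟩
  have hSnne : ∀ n, ((fun μ => Real.log (ln n μ) / μ) '' Ioi 0).Nonempty :=
    fun n => ⟨_, mem_image_of_mem _ (mem_Ioi.mpr one_pos)⟩
  have hcleΦ : ∀ μ ∈ Ioi (0:ℝ), c ≤ Real.log (l μ) / μ :=
    fun μ hμ => csInf_le hSbdd (mem_image_of_mem _ hμ)
  have hcn_le : ∀ n, sInf ((fun μ => Real.log (ln n μ) / μ) '' Ioi 0) ≤ c := by
    intro n
    refine le_csInf hSne ?_
    rintro y ⟨μ, hμ, rfl⟩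
    exact le_trans (csInf_le (hSnbdd n) (mem_image_of_mem _ hμ)) (hΦle n μ hμ)
  -- key uniform lower bound
  have key : ∀ ε > (0:ℝ), ∃ N, ∀ n ≥ N, ∀ μ ∈ Ioi (0:ℝ),
      c - ε ≤ Real.log (ln n μ) / μ := by
    intro ε hε
    -- Step A: a point M ≥ 1 where the unit chord slope of log ∘ l is ≥ c - ε/4
    obtain ⟨M, hM1, hMs⟩ : ∃ M : ℝ, 1 ≤ M ∧
        c - ε/4 ≤ Real.log (l (M+1)) - Real.log (l M) := by
      by_contra hcon
      push_neg at hcon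
      set a : ℝ := c - ε/4 with hadef
      have claim : ∀ k : ℕ, Real.log (l (1 + (k:ℝ))) ≤ Real.log (l 1) + k * a := by
        intro k
        induction k with
        | zero => simp
        | succ k ih =>
          have h1 : (1:ℝ) ≤ 1 + (k:ℝ) := le_add_of_nonneg_right (Nat.cast_nonneg k)
          have h2 := hcon (1 + (k:ℝ)) h1
          have h3 : (1:ℝ) + ((k:ℕ)+1 : ℕ) = (1 + (k:ℝ)) + 1 := by push_cast; ring
          rw [h3]
          push_cast
          linarith
      have h3 : ∀ k : ℕ, c ≤ a + (Real.log (l 1) - a) / (1 + (k:ℝ)) := by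
        intro k
        have hk : (0:ℝ) < 1 + (k:ℝ) := by positivity
        have h4 := hcleΦ (1 + (k:ℝ)) (mem_Ioi.mpr hk)
        have h5 : Real.log (l (1+(k:ℝ))) / (1+(k:ℝ))
            ≤ a + (Real.log (l 1) - a) / (1 + (k:ℝ)) := by
          rw [div_le_iff₀ hk]
          have heq : (a + (Real.log (l 1) - a) / (1 + (k:ℝ))) * (1 + (k:ℝ))
              = Real.log (l 1) + k * a := by field_simp; try ring
          rw [heq]; exact claim k
        linarith
      have h6 : Tendsto (fun k : ℕ => a + (Real.log (l 1) - a) / (1 + (k:ℝ)))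
          atTop (nhds (a + 0)) :=
        tendsto_const_nhds.add (tendsto_const_nhds.div_atTop
          (tendsto_atTop_add_const_left _ 1 tendsto_natCast_atTop_atTop))
      have h7 : c ≤ a + 0 := ge_of_tendsto' h6 h3
      rw [add_zero, hadef] at h7
      linarith
    have hM0 : (0:ℝ) ≤ M := le_trans zero_le_one hM1
    have hM10 : (0:ℝ) ≤ M + 1 := by linarith
    -- convergence of values and chord slopes at M, M+1
    have htM : Tendsto (fun n => Real.log (ln n M)) atTop (nhds (Real.log (l M))) :=
      (Real.continuousAt_log (hpos M hM0).ne').tendsto.comp (hptwise M hM0)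
    have htM1 : Tendsto (fun n => Real.log (ln n (M+1))) atTop
        (nhds (Real.log (l (M+1)))) :=
      (Real.continuousAt_log (hpos (M+1) hM10).ne').tendsto.comp (hptwise (M+1) hM10)
    have hsn : Tendsto (fun n => Real.log (ln n (M+1)) - Real.log (ln n M)) atTop
        (nhds (Real.log (l (M+1)) - Real.log (l M))) := htM1.sub htM
    have hev1 : ∀ᶠ n in atTop,
        Real.log (l (M+1)) - Real.log (l M) - ε/4 <
          Real.log (ln n (M+1)) - Real.log (ln n M) :=
      hsn.eventually (eventually_gt_nhds (by linarith))
    have hev2 : ∀ᶠ n in atTop, Real.log (l (M+1)) - 1 < Real.log (ln n (M+1)) :=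
      htM1.eventually (eventually_gt_nhds (by linarith))
    obtain ⟨N₁, hN₁⟩ := eventually_atTop.mp (hev1.and hev2)
    obtain ⟨b, hbdef⟩ : ∃ x : ℝ, x = c - ε/2 := ⟨_, rfl⟩
    obtain ⟨D, hDdef⟩ : ∃ x : ℝ, x = (Real.log (l (M+1)) - 1) - b * (M+1) := ⟨_, rfl⟩
    obtain ⟨T, hTdef⟩ : ∃ x : ℝ, x = max (M+1) (2*(|D|+1)/ε) := ⟨_, rfl⟩
    have hTM : M + 1 ≤ T := hTdef ▸ le_max_left _ _
    have hTD : 2*(|D|+1)/ε ≤ T := hTdef ▸ le_max_right _ _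
    have hTpos : 0 < T := lt_of_lt_of_le (by linarith) hTM
    -- small μ region
    set a₀ : ℝ := Real.log (ln 0 0) with ha₀def
    have ha₀ : 0 < a₀ := Real.log_pos (h0n 0)
    have hcont0 : ContinuousOn (fun y => Real.log (ln 0 y)) (Ici 0) :=
      ((hC2n 0).continuousOn).log (fun x hx => (hposn 0 x hx).ne')
    have hev0 : (fun y => Real.log (ln 0 y)) ⁻¹' Ioi (a₀/2) ∈ nhdsWithin 0 (Ici 0) :=
      hcont0 0 Set.self_mem_Ici (Ioi_mem_nhds (by linarith))
    obtain ⟨δ, hδpos, hsub⟩ := Metric.mem_nhdsWithin_iff.mp hev0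
    set δ₁ : ℝ := min (δ/2) ((a₀/2) / (|c| + 1)) with hδ₁def
    have hδ₁pos : 0 < δ₁ := by
      apply lt_min (by linarith)
      positivity
    have small : ∀ n, ∀ μ : ℝ, 0 < μ → μ ≤ δ₁ → c - ε ≤ Real.log (ln n μ) / μ := by
      intro n μ hμpos hμδ
      have hμδ2 : μ < δ := by
        have := min_le_left (δ/2) ((a₀/2) / (|c| + 1))
        calc μ ≤ δ₁ := hμδ
          _ ≤ δ/2 := this
          _ < δ := by linarith
      have hball : μ ∈ Metric.ball (0:ℝ) δ ∩ Ici 0 := by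
        constructor
        · simp only [Metric.mem_ball, Real.dist_eq, sub_zero, abs_of_pos hμpos]
          exact hμδ2
        · exact hμpos.le
      have h01 : a₀/2 < Real.log (ln 0 μ) := hsub hball
      have h02 : Real.log (ln 0 μ) ≤ Real.log (ln n μ) :=
        Real.log_le_log (hposn 0 μ hμpos.le) (lnmono μ hμpos.le (Nat.zero_le n))
      have h03 : (a₀/2) / μ ≤ Real.log (ln n μ) / μ := hdiv _ _ μ hμpos (by linarith)
      have h04 : (a₀/2) / δ₁ ≤ (a₀/2) / μ := by gcongr <;> linarith
      have h05 : |c| + 1 ≤ (a₀/2) / δ₁ := by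
        rw [le_div_iff₀ hδ₁pos]
        have h06 : δ₁ ≤ (a₀/2) / (|c| + 1) := min_le_right _ _
        have h07 : 0 < |c| + 1 := by positivity
        calc (|c| + 1) * δ₁ ≤ (|c| + 1) * ((a₀/2) / (|c| + 1)) := by gcongr
          _ = a₀/2 := by field_simp; try ring
      have h08 : c ≤ |c| := le_abs_self c
      linarith
    -- Dini region on [δ₁, T]
    have hKsub : Icc δ₁ T ⊆ Ici (0:ℝ) := fun x hx => le_trans hδ₁pos.le hx.1
    have hKne0 : ∀ x ∈ Icc δ₁ T, x ≠ 0 := fun x hx => (lt_of_lt_of_le hδ₁pos hx.1).ne'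
    obtain ⟨N₂, hN₂⟩ := dini_lower (K := Icc δ₁ T) isCompact_Icc
      (F := fun n μ => Real.log (ln n μ) / μ) (g := fun μ => Real.log (l μ) / μ)
      (fun n => (((hC2n n).continuousOn.mono hKsub).log
        (fun x hx => (hposn n x (hKsub hx)).ne')).div continuousOn_id hKne0)
      (((hC2.continuousOn.mono hKsub).log
        (fun x hx => (hpos x (hKsub hx)).ne')).div continuousOn_id hKne0)
      (fun x hx => hΦmono x (mem_Ioi.mpr (lt_of_lt_of_le hδ₁pos hx.1)))
      (fun x hx => hΦlim x (mem_Ioi.mpr (lt_of_lt_of_le hδ₁pos hx.1))) hε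
    -- large μ region
    have large : ∀ n ≥ N₁, ∀ μ : ℝ, T ≤ μ → c - ε ≤ Real.log (ln n μ) / μ := by
      intro n hn μ hμT
      have hμM : M + 1 ≤ μ := le_trans hTM hμT
      have hμpos : 0 < μ := lt_of_lt_of_le hTpos hμT
      obtain ⟨hs1, hs2⟩ := hN₁ n hn
      have hsb : b ≤ Real.log (ln n (M+1)) - Real.log (ln n M) := by
        rw [hbdef]; linarith
      -- convexity chord bound
      have hchord : Real.log (ln n (M+1)) +
          (Real.log (ln n (M+1)) - Real.log (ln n M)) * (μ - (M+1))
            ≤ Real.log (ln n μ) := by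
        rcases eq_or_lt_of_le hμM with heq | hlt
        · rw [← heq]; simp
        · have hslope := (hconvn n).slope_mono_adjacent (x := M) (y := M+1) (z := μ)
            hM0 (le_of_lt (lt_of_le_of_lt hM10 hlt)) (by linarith) hlt
          have h1 : (M + 1 - M : ℝ) = 1 := by ring
          rw [h1, div_one] at hslope
          have h2 := (le_div_iff₀ (by linarith : (0:ℝ) < μ - (M+1))).mp hslope
          linarith
      have hD : D + b * μ ≤ Real.log (ln n μ) := by
        have h1 : b * (μ - (M+1)) ≤
            (Real.log (ln n (M+1)) - Real.log (ln n M)) * (μ - (M+1)) :=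
          mul_le_mul_of_nonneg_right hsb (by linarith)
        have h2 : D + b * μ = (Real.log (l (M+1)) - 1) + b * (μ - (M+1)) := by
          rw [hDdef]; ring
        linarith
      rw [le_div_iff₀ hμpos]
      have h3 : (ε/2) * T ≤ (ε/2) * μ := by gcongr
      have h4 : (ε/2) * (2*(|D|+1)/ε) ≤ (ε/2) * T := by gcongr
      have h5 : (ε/2) * (2*(|D|+1)/ε) = |D| + 1 := by field_simp
      have h6 : -|D| ≤ D := neg_abs_le D
      have h7 : (c - ε) * μ = b * μ - (ε/2) * μ := by rw [hbdef]; ring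
      have h8 : |D| + 1 ≤ ε/2 * μ := by linarith
      have h9 : -(ε/2 * μ) ≤ D := by linarith
      linarith
    refine ⟨max N₁ N₂, fun n hn μ hμ => ?_⟩
    have hn1 : N₁ ≤ n := le_trans (le_max_left _ _) hn
    have hn2 : N₂ ≤ n := le_trans (le_max_right _ _) hn
    have hμpos : (0:ℝ) < μ := hμ
    rcases le_total μ δ₁ with h | h
    · exact small n μ hμpos h
    · rcases le_total μ T with h' | h'
      · have := hN₂ n hn2 μ ⟨h, h'⟩
        have hc := hcleΦ μ hμ
        linarith
      · exact large n hn1 μ h'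
  -- conclude
  rw [show nhds c = nhds c from rfl]
  refine tendsto_order.2 ⟨fun x hx => ?_, fun x hx => ?_⟩
  · obtain ⟨N, hN⟩ := key ((c - x)/2) (by linarith)
    filter_upwards [eventually_ge_atTop N] with n hn
    have h : c - (c - x)/2 ≤ sInf ((fun μ => Real.log (ln n μ) / μ) '' Ioi 0) := by
      refine le_csInf (hSnne n) ?_
      rintro y ⟨μ, hμ, rfl⟩
      exact hN n hn μ hμ
    linarith
  · filter_upwards with n
    exact lt_of_le_of_lt (hcn_le n) hx
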